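/- arXiv:0903.1879 — 5 statements merged into one kernel-verified Lean document; each statement's English description precedes it below -/
import Mathlib

section
/- Let F be a finite field and n ≥ 1. If E ⊆ F^n contains a line in every direction (i.e., for every nonzero v ∈ F^n there exists a ∈ F^n with {a + t·v : t ∈ F} ⊆ E), then |E| ≥ c_n |F|^n, where c_n = 1/n! suffices. -/
open Polynomial in
lemma kakeya_coeff_prod_top {ι R : Type*} [CommSemiring R] (s : Finset ι) (f : ι → R[X])
    (d : ι → ℕ) (h : ∀ i ∈ s, (f i).natDegree ≤ d i) :
    (∏ i ∈ s, f i).coeff (∑ i ∈ s, d i) = ∏ i ∈ s, (f i).coeff (d i) := by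
  classical
  induction s using Finset.cons_induction with
  | empty => simp
  | cons a s ha ih =>
    rw [Finset.prod_cons, Finset.sum_cons,
      Polynomial.coeff_mul_add_eq_of_natDegree_le (h a (Finset.mem_cons_self a s))
        ((Polynomial.natDegree_prod_le s f).trans
          (Finset.sum_le_sum fun i hi => h i (Finset.mem_cons_of_mem hi))),
      ih (fun i hi => h i (Finset.mem_cons_of_mem hi)), Finset.prod_cons]

open Polynomial in
lemma kakeya_natDegree_linear_le {R : Type*} [CommSemiring R] (a v : R) :
    (Polynomial.C a + Polynomial.C v * Polynomial.X).natDegree ≤ 1 :=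
  (Polynomial.natDegree_add_le _ _).trans (by
    simp only [Polynomial.natDegree_C, Nat.zero_le, max_le_iff, true_and]
    exact (Polynomial.natDegree_C_mul_le v X).trans Polynomial.natDegree_X_le)

open Polynomial in
lemma kakeya_coeff_linear_pow {R : Type*} [CommSemiring R] (a v : R) (k : ℕ) :
    ((Polynomial.C a + Polynomial.C v * Polynomial.X) ^ k).coeff k = v ^ k := by
  induction k with
  | zero => simp
  | succ k ih =>
    rw [pow_succ, Polynomial.coeff_mul_add_eq_of_natDegree_le
      ((Polynomial.natDegree_pow_le).trans (by
        simpa using Nat.mul_le_mul_left k (kakeya_natDegree_linear_le a v)))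
      (kakeya_natDegree_linear_le a v), ih]
    simp [pow_succ]


open Polynomial in
lemma kakeya_natDegree_linear_pow_le {R : Type*} [CommSemiring R] (a v : R) (k : ℕ) :
    ((Polynomial.C a + Polynomial.C v * Polynomial.X) ^ k).natDegree ≤ k :=
  (Polynomial.natDegree_pow_le).trans <| by
    calc k * (Polynomial.C a + Polynomial.C v * Polynomial.X).natDegree
        ≤ k * 1 := Nat.mul_le_mul_left k (kakeya_natDegree_linear_le a v)
      _ = k := Nat.mul_one k

open MvPolynomial in
lemma kakeya_line_poly {n : ℕ} {F : Type*} [CommRing F] (P : MvPolynomial (Fin n) F)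
    (a v : Fin n → F) :
    ∃ Q : Polynomial F, Q.natDegree ≤ P.totalDegree ∧
      (∀ t : F, Q.eval t = MvPolynomial.eval (a + t • v) P) ∧
      Q.coeff P.totalDegree
        = MvPolynomial.eval v (MvPolynomial.homogeneousComponent P.totalDegree P) := by
  classical
  set g : Fin n → Polynomial F := fun i => Polynomial.C (a i) + Polynomial.C (v i) * Polynomial.X
    with hg
  have hgpow : ∀ (i : Fin n) (k : ℕ), (g i ^ k).natDegree ≤ k := fun i k =>
    kakeya_natDegree_linear_pow_le (a i) (v i) k
  refine ⟨MvPolynomial.eval₂ Polynomial.C g P, ?_, ?_, ?_⟩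
  · rw [eval₂_eq]
    refine Polynomial.natDegree_sum_le_of_forall_le _ _ fun s hs => ?_
    refine (Polynomial.natDegree_mul_le).trans ?_
    simp only [Polynomial.natDegree_C, zero_add]
    refine ((Polynomial.natDegree_prod_le _ _).trans ?_).trans (le_totalDegree hs)
    rw [Finsupp.sum]
    exact Finset.sum_le_sum fun i _ => hgpow i (s i)
  · intro t
    have h := MvPolynomial.eval₂_comp_left (Polynomial.evalRingHom t) Polynomial.C g P
    simp only [Polynomial.coe_evalRingHom] at h
    rw [h]
    have h1 : (Polynomial.evalRingHom t).comp Polynomial.C = RingHom.id F := by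
      ext r; simp
    rw [h1]
    show MvPolynomial.eval₂ _ _ P = MvPolynomial.eval₂ (RingHom.id F) _ P
    refine MvPolynomial.eval₂_congr _ _ _ fun {i c} _ _ => ?_
    simp only [Function.comp_apply, hg, Polynomial.eval_add, Polynomial.eval_C,
      Polynomial.eval_mul, Polynomial.eval_X, Pi.add_apply, Pi.smul_apply, smul_eq_mul]
    ring
  · rw [eval₂_eq, Polynomial.finset_sum_coeff]
    rw [MvPolynomial.eval_eq]
    have hsup : (MvPolynomial.homogeneousComponent P.totalDegree P).support ⊆ P.support := by
      intro s hs
      rw [MvPolynomial.mem_support_iff, MvPolynomial.coeff_homogeneousComponent] at hs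
      rw [MvPolynomial.mem_support_iff]
      intro h0
      exact hs (by rw [h0]; simp)
    rw [Finset.sum_subset hsup (fun s hs hns => by
      rw [MvPolynomial.notMem_support_iff] at hns
      rw [hns, zero_mul])]
    refine Finset.sum_congr rfl fun s hs => ?_
    rw [MvPolynomial.coeff_homogeneousComponent]
    by_cases hd : (s.degree) = P.totalDegree
    · rw [if_pos hd]
      have hsum : P.totalDegree = ∑ i ∈ s.support, s i := by
        rw [← hd]; rfl
      rw [Polynomial.coeff_C_mul, hsum, kakeya_coeff_prod_top _ _ _ (fun i _ => hgpow i (s i))]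
      congr 1
      exact Finset.prod_congr rfl fun i _ => kakeya_coeff_linear_pow (a i) (v i) (s i)
    · rw [if_neg hd, zero_mul]
      have hdeq : s.degree = ∑ i ∈ s.support, s i := rfl
      have hle : (s.sum fun _ e => e) ≤ P.totalDegree := le_totalDegree hs
      have hle2 : s.degree ≤ P.totalDegree := hle
      have hlt : (∑ i ∈ s.support, s i) < P.totalDegree := by omega
      refine Polynomial.coeff_eq_zero_of_natDegree_lt (lt_of_le_of_lt ?_ hlt)
      refine (Polynomial.natDegree_mul_le).trans ?_
      simp only [Polynomial.natDegree_C, zero_add]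
      exact (Polynomial.natDegree_prod_le _ _).trans
        (Finset.sum_le_sum fun i _ => hgpow i (s i))

lemma kakeya_card_monomials (n m : ℕ) (hn : 1 ≤ n) :
    Nat.card {s : Fin n →₀ ℕ // (s.sum fun _ e => e) ≤ m} = (m + n).choose n := by
  classical
  have e1 : {s : Fin n →₀ ℕ // (s.sum fun _ e => e) ≤ m}
      ≃ {μ : Multiset (Fin n) // Multiset.card μ ≤ m} :=
    Equiv.subtypeEquiv
      ⟨Finsupp.toMultiset, Multiset.toFinsupp, fun f => Finsupp.toMultiset_toFinsupp f,
        fun s => Multiset.toFinsupp_toMultiset s⟩ fun s => by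
      change (s.sum fun _ e => e) ≤ m ↔ Multiset.card (Finsupp.toMultiset s) ≤ m
      rw [Finsupp.card_toMultiset]; rfl
  have e2 : {μ : Multiset (Fin n) // Multiset.card μ ≤ m}
      ≃ (Σ k : Fin (m + 1), Sym (Fin n) k) :=
    { toFun := fun μ => ⟨⟨Multiset.card μ.1, Nat.lt_succ_of_le μ.2⟩, ⟨μ.1, rfl⟩⟩
      invFun := fun x => ⟨x.2.1, by rw [x.2.2]; exact Nat.lt_succ_iff.mp x.1.2⟩
      left_inv := fun μ => rfl
      right_inv := by
        rintro ⟨⟨k, hk⟩, ⟨μ, hμ⟩⟩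
        have hk2 : k = Multiset.card μ := by simpa using hμ.symm
        subst hk2
        rfl }
  rw [Nat.card_congr (e1.trans e2), Nat.card_eq_fintype_card, Fintype.card_sigma]
  rw [Fin.sum_univ_eq_sum_range fun k => Fintype.card (Sym (Fin n) k)]
  have hterm : ∀ k, Fintype.card (Sym (Fin n) k) = (k + (n - 1)).choose (n - 1) := by
    intro k
    rw [Sym.card_sym_eq_choose, Fintype.card_fin,
      Nat.choose_symm_of_eq_add (show n + k - 1 = k + (n - 1) by omega)]
    congr 1; omega
  rw [Finset.sum_congr rfl fun k _ => hterm k, Nat.sum_range_add_choose m (n - 1)]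
  congr 1 <;> omega

open MvPolynomial in
lemma kakeya_exists_vanishing_poly {n : ℕ} (hn : 1 ≤ n) {F : Type*} [Field F] (m : ℕ)
    (E : Set (Fin n → F)) (hEfin : E.Finite)
    (hcard : Nat.card {s : Fin n →₀ ℕ // (s.sum fun _ e => e) ≤ m} = (m + n).choose n)
    (hlt : E.ncard < (m + n).choose n) :
    ∃ P : MvPolynomial (Fin n) F, P ≠ 0 ∧ P.totalDegree ≤ m ∧
      ∀ x ∈ E, MvPolynomial.eval x P = 0 := by
  classical
  haveI : Fintype E := hEfin.fintype
  set V := restrictTotalDegree (Fin n) F m with hVdef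
  have hb : Module.Basis {s : Fin n →₀ ℕ | (s.sum fun _ e => e) ≤ m} F V :=
    basisRestrictSupport F _
  haveI hF1 : Finite {s : Fin n →₀ ℕ // (s.sum fun _ e => e) ≤ m} :=
    Nat.finite_of_card_ne_zero (by
      rw [hcard]; exact (Nat.choose_pos (Nat.le_add_left n m)).ne')
  haveI : Finite {s : Fin n →₀ ℕ | (s.sum fun _ e => e) ≤ m} := hF1
  haveI : Fintype {s : Fin n →₀ ℕ | (s.sum fun _ e => e) ≤ m} := Fintype.ofFinite _
  haveI : Fintype {s : Fin n →₀ ℕ // (s.sum fun _ e => e) ≤ m} := Fintype.ofFinite _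
  have hV : Module.finrank F V = (m + n).choose n := by
    rw [Module.finrank_eq_card_basis hb, ← hcard, Nat.card_eq_fintype_card]
    exact Fintype.card_congr' rfl
  set L : V →ₗ[F] (E → F) :=
    { toFun := fun p x => MvPolynomial.eval (x : Fin n → F) (p : MvPolynomial (Fin n) F)
      map_add' := fun p q => by ext x; simp
      map_smul' := fun c p => by ext x; simp }
  by_contra hcon
  push_neg at hcon
  have hker : ∀ p : V, L p = 0 → p = 0 := by
    intro p hp
    have h1 : (p : MvPolynomial (Fin n) F).totalDegree ≤ m :=
      (mem_restrictTotalDegree _ _ _).mp p.2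
    have h2 : ∀ x ∈ E, MvPolynomial.eval x (p : MvPolynomial (Fin n) F) = 0 := by
      intro x hx
      exact congrFun hp ⟨x, hx⟩
    by_cases h0 : (p : MvPolynomial (Fin n) F) = 0
    · exact Subtype.ext h0
    · exact absurd (hcon _ h0 h1) (by simpa using h2)
  have hinj : Function.Injective L := by
    rw [← LinearMap.ker_eq_bot]
    exact LinearMap.ker_eq_bot'.mpr hker
  have hle := LinearMap.finrank_le_finrank_of_injective hinj
  rw [hV, Module.finrank_fintype_fun_eq_card] at hle
  have hE : Fintype.card E = E.ncard := by
    rw [← Nat.card_eq_fintype_card, Nat.card_coe_set_eq]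
  omega

/-- **Kakeya set conjecture for `F^n`** (Dvir). If `E ⊆ F^n` contains a line in every
direction, then `|E| ≥ |F|^n / n!`. -/
theorem kakeya_set_finite_field (n : ℕ) (hn : 1 ≤ n) (F : Type*) [Field F] [Fintype F]
    (E : Set (Fin n → F))
    (hE : ∀ v : Fin n → F, v ≠ 0 → ∃ a : Fin n → F, ∀ t : F, a + t • v ∈ E) :
    ((Fintype.card F : ℝ) ^ n) / (Nat.factorial n : ℝ) ≤ E.ncard := by
  classical
  set q := Fintype.card F with hq
  have hq1 : 1 ≤ q := Fintype.card_pos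
  set m := q - 1 with hm
  have key : (m + n).choose n ≤ E.ncard := by
    by_contra hlt
    push_neg at hlt
    obtain ⟨P, hP0, hPdeg, hPval⟩ :=
      kakeya_exists_vanishing_poly hn m E (Set.toFinite E) (kakeya_card_monomials n m hn) hlt
    set d := P.totalDegree with hd
    set H := MvPolynomial.homogeneousComponent d P with hH
    -- H is nonzero
    have hH0 : H ≠ 0 := by
      obtain ⟨s, hs, hsmax⟩ := Finset.exists_mem_eq_sup P.support
        (MvPolynomial.support_nonempty.mpr hP0) fun s : Fin n →₀ ℕ => s.sum fun _ e => e
      intro h0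
      have hce : MvPolynomial.coeff s H = MvPolynomial.coeff s P := by
        rw [hH, MvPolynomial.coeff_homogeneousComponent, if_pos]
        show s.degree = d
        rw [hd]
        exact hsmax.symm
      rw [h0, MvPolynomial.coeff_zero] at hce
      exact (MvPolynomial.mem_support_iff.mp hs) hce.symm
    -- H vanishes along every nonzero direction
    have hline : ∀ v : Fin n → F, v ≠ 0 → MvPolynomial.eval v H = 0 := by
      intro v hv
      obtain ⟨a, ha⟩ := hE v hv
      obtain ⟨Q, hQdeg, hQeval, hQcoeff⟩ := kakeya_line_poly P a v
      have hQ0 : Q = 0 := by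
        refine Polynomial.eq_zero_of_natDegree_lt_card_of_eval_eq_zero Q
          (Function.injective_id (α := F)) (fun t => ?_) ?_
        · rw [hQeval]
          exact hPval _ (ha t)
        · exact lt_of_le_of_lt (hQdeg.trans hPdeg) (by omega)
      rw [← hQcoeff, hQ0, Polynomial.coeff_zero]
    -- hence H vanishes everywhere
    have heval : ∀ v : Fin n → F, MvPolynomial.eval v H = 0 := by
      intro v
      by_cases hd0 : d = 0
      · have hHc : H = MvPolynomial.C (MvPolynomial.coeff 0 P) := by
          rw [hH, hd0, MvPolynomial.homogeneousComponent_zero]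
        have hw : (fun _ : Fin n => (1 : F)) ≠ 0 := by
          intro h
          have := congrFun h ⟨0, hn⟩
          simp at this
        have := hline _ hw
        rw [hHc, MvPolynomial.eval_C] at this ⊢
        exact this
      · by_cases hv : v = 0
        · subst hv
          rw [MvPolynomial.eval_eq]
          refine Finset.sum_eq_zero fun s hs => ?_
          have hsd : s.degree = d := by
            by_contra hne
            rw [MvPolynomial.mem_support_iff, hH,
              MvPolynomial.coeff_homogeneousComponent, if_neg hne] at hs
            exact hs rfl
          have hsne : s.support.Nonempty := by
            rw [Finset.nonempty_iff_ne_empty]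
            intro hemp
            have : s.degree = 0 := by
              show (∑ i ∈ s.support, s i) = 0
              rw [hemp]
              simp
            omega
          obtain ⟨i, hi⟩ := hsne
          rw [Finset.prod_eq_zero hi (by
            rw [Pi.zero_apply, zero_pow (Finsupp.mem_support_iff.mp hi)]), mul_zero]
        · exact hline v hv
    refine hH0 (MvPolynomial.IsHomogeneous.eq_zero_of_forall_eval_eq_zero_of_le_card
      (MvPolynomial.homogeneousComponent_isHomogeneous d P) heval ?_)
    have h1 : (d : Cardinal) ≤ (q : Cardinal) := by
      have : d ≤ q := hPdeg.trans (by omega)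
      exact_mod_cast this
    rwa [Cardinal.mk_fintype, ← hq]
  -- arithmetic conclusion
  have hnat : q ^ n ≤ E.ncard * n.factorial := by
    calc q ^ n ≤ q.ascFactorial n := Nat.pow_succ_le_ascFactorial q n
      _ = n.factorial * (q + n - 1).choose n := Nat.ascFactorial_eq_factorial_mul_choose' q n
      _ = n.factorial * (m + n).choose n := by congr 2; omega
      _ ≤ n.factorial * E.ncard := Nat.mul_le_mul_left _ key
      _ = E.ncard * n.factorial := Nat.mul_comm _ _
  rw [div_le_iff₀ (by positivity : (0:ℝ) < (n.factorial : ℝ))]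
  exact_mod_cast hnat
end

section
/- Let F be a finite field with q = |F| elements, let n ≥ 1, and let D ≥ 1. Let f : F^n → ℤ≥0. The F-vector space of polynomials in n variables over F of degree at most D that vanish to order at least f(v) at every point v ∈ F^n has codimension at most ∑_{v ∈ F^n} C(f(v)+n-1, n) in the space of all polynomials of degree at most D; in particular, if C(D+n, n) > ∑_{v ∈ F^n} C(f(v)+n-1, n), then there exists a nonzero polynomial of degree at most D vanishing to order at least f(v) at each v. -/
open MvPolynomial
open scoped BigOperators

noncomputable section

/-- functions with bounded sum ≃ functions on Option with exact sum -/
def optionSumEquiv (α : Type*) [Fintype α] (N : ℕ) :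
    {P : Option α → ℕ // ∑ i, P i = N} ≃ {d : α → ℕ // ∑ i, d i ≤ N} where
  toFun P := ⟨fun a => P.1 (some a), by
    have := P.2
    rw [Fintype.sum_option] at this
    show (∑ a, P.1 (some a)) ≤ N
    omega⟩
  invFun d := ⟨fun o => o.elim (N - ∑ i, d.1 i) d.1, by
    rw [Fintype.sum_option]
    simp only [Option.elim]
    have := d.2
    omega⟩
  left_inv P := by
    have h := P.2
    rw [Fintype.sum_option] at h
    ext o
    cases o with
    | none => simp only [Option.elim]; omega
    | some a => rfl
  right_inv d := by ext a; rfl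

lemma nat_card_sum_le (n N : ℕ) :
    Nat.card {d : Fin n →₀ ℕ // (∑ i, d i) ≤ N} = (N + n).choose n := by
  have e1 : {d : Fin n →₀ ℕ // (∑ i, d i) ≤ N} ≃ {d : Fin n → ℕ // (∑ i, d i) ≤ N} :=
    (Finsupp.equivFunOnFinite).subtypeEquiv (fun d => by rfl)
  have e2 := (optionSumEquiv (Fin n) N).symm
  have e3 := (Sym.equivNatSumOfFintype (Option (Fin n)) N)
  rw [Nat.card_congr (e1.trans (e2.trans e3.symm)), Nat.card_eq_fintype_card,
    Sym.card_sym_eq_choose]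
  simp only [Fintype.card_option, Fintype.card_fin]
  have h := Nat.choose_symm (show n ≤ N + n by omega)
  rw [show N + n - n = N by omega] at h
  rw [show n + 1 + N - 1 = N + n by omega, h]

lemma finite_sum_le (n m : ℕ) : Finite {d : Fin n →₀ ℕ // (∑ i, d i) ≤ m} := by
  have e1 : {d : Fin n →₀ ℕ // (∑ i, d i) ≤ m} ≃ {d : Fin n → ℕ // (∑ i, d i) ≤ m} :=
    (Finsupp.equivFunOnFinite).subtypeEquiv (fun d => by rfl)
  exact Finite.of_equiv _ ((e1.trans (optionSumEquiv (Fin n) m).symm).trans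
    (Sym.equivNatSumOfFintype (Option (Fin n)) m).symm).symm

lemma finite_sum_lt (n m : ℕ) : Finite {d : Fin n →₀ ℕ // (∑ i, d i) < m} := by
  have : Finite {d : Fin n →₀ ℕ // (∑ i, d i) ≤ m} := finite_sum_le n m
  exact Finite.of_injective (fun x : {d : Fin n →₀ ℕ // (∑ i, d i) < m} =>
    (⟨x.1, le_of_lt x.2⟩ : {d : Fin n →₀ ℕ // (∑ i, d i) ≤ m})) (fun x y h => by simpa [Subtype.ext_iff] using h)

lemma nat_card_sum_lt (n m : ℕ) (hn : 1 ≤ n) :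
    Nat.card {d : Fin n →₀ ℕ // (∑ i, d i) < m} = (m + n - 1).choose n := by
  cases m with
  | zero =>
    have : IsEmpty {d : Fin n →₀ ℕ // (∑ i, d i) < 0} := ⟨fun x => by omega⟩
    rw [Nat.card_of_isEmpty]
    symm
    apply Nat.choose_eq_zero_of_lt
    omega
  | succ k =>
    have : {d : Fin n →₀ ℕ // (∑ i, d i) < k + 1} ≃ {d : Fin n →₀ ℕ // (∑ i, d i) ≤ k} :=
      Equiv.subtypeEquivRight (fun d => by omega)
    rw [Nat.card_congr this, nat_card_sum_le]
    congr 1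
    omega


/-- The space of polynomials of total degree at most `D` vanishing to order at least
`f v` at every point `v ∈ F^n` (i.e. all Taylor coefficients of degree `< f v` of
`P(x + v)` vanish). -/
def vanishingSpace (F : Type*) [Field F] [Fintype F] (n D : ℕ) (f : (Fin n → F) → ℕ) :
    Submodule F (MvPolynomial (Fin n) F) :=
  MvPolynomial.restrictTotalDegree (Fin n) F D ⊓
    ⨅ (v : Fin n → F), ⨅ (d : Fin n →₀ ℕ), ⨅ (_ : (∑ i, d i) < f v),
      LinearMap.ker ((MvPolynomial.lcoeff F d).comp
        (MvPolynomial.aeval (fun i => X i + C (v i)) :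
          MvPolynomial (Fin n) F →ₐ[F] MvPolynomial (Fin n) F).toLinearMap)

/-- Vanishing to order `f v` at each `v` imposes at most `∑_v C(f(v)+n-1, n)` linear
conditions on the space of polynomials of degree at most `D`; in particular if
`C(D+n, n) > ∑_v C(f(v)+n-1, n)` there is a nonzero polynomial of degree at most `D`
vanishing to order at least `f v` at every `v`. -/
theorem vanishing_space_codim (F : Type) [Field F] [Fintype F] (n D : ℕ) (hn : 1 ≤ n)
    (hD : 1 ≤ D) (f : (Fin n → F) → ℕ) :
    Module.finrank F (MvPolynomial.restrictTotalDegree (Fin n) F D) ≤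
      Module.finrank F (vanishingSpace F n D f) +
        ∑ v : Fin n → F, Nat.choose (f v + n - 1) n ∧
    ((∑ v : Fin n → F, Nat.choose (f v + n - 1) n) < Nat.choose (D + n) n →
      ∃ P : MvPolynomial (Fin n) F, P ≠ 0 ∧ P.totalDegree ≤ D ∧
        ∀ (v : Fin n → F) (d : Fin n →₀ ℕ), (∑ i, d i) < f v →
          coeff d (MvPolynomial.aeval (fun i => X i + C (v i)) P) = 0) := by
  classical
  set p := MvPolynomial.restrictTotalDegree (Fin n) F D with hp
  haveI : ∀ v : Fin n → F, Finite {d : Fin n →₀ ℕ // (∑ i, d i) < f v} :=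
    fun v => finite_sum_lt n (f v)
  haveI : ∀ v : Fin n → F, Fintype {d : Fin n →₀ ℕ // (∑ i, d i) < f v} :=
    fun v => Fintype.ofFinite _
  let L : MvPolynomial (Fin n) F →ₗ[F]
      ((Σ v : Fin n → F, {d : Fin n →₀ ℕ // (∑ i, d i) < f v}) → F) :=
    LinearMap.pi fun t => (MvPolynomial.lcoeff F t.2.1).comp
      (MvPolynomial.aeval (fun i => X i + C (t.1 i)) :
          MvPolynomial (Fin n) F →ₐ[F] MvPolynomial (Fin n) F).toLinearMap
  have hV : vanishingSpace F n D f = p ⊓ LinearMap.ker L := by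
    unfold vanishingSpace
    rw [← hp]
    congr 1
    ext P
    simp only [Submodule.mem_iInf, LinearMap.mem_ker, L, LinearMap.pi_apply, funext_iff,
      Pi.zero_apply, Sigma.forall, Subtype.forall]
  have hrank := LinearMap.finrank_range_add_finrank_ker (L.domRestrict p)
  have hker : Module.finrank F (LinearMap.ker (L.domRestrict p)) =
      Module.finrank F (vanishingSpace F n D f) := by
    rw [hV]
    have h1 : LinearMap.ker (L.domRestrict p) =
        Submodule.comap p.subtype (p ⊓ LinearMap.ker L) := by
      rw [LinearMap.ker_domRestrict, Submodule.comap_inf, Submodule.comap_subtype_self,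
        top_inf_eq]
    rw [h1]
    exact (Submodule.comapSubtypeEquivOfLe inf_le_left).finrank_eq
  have hrange : Module.finrank F (LinearMap.range (L.domRestrict p)) ≤
      ∑ v : Fin n → F, Nat.choose (f v + n - 1) n := by
    calc Module.finrank F (LinearMap.range (L.domRestrict p))
        ≤ Module.finrank F ((Σ v : Fin n → F, {d : Fin n →₀ ℕ // (∑ i, d i) < f v}) → F) :=
          Submodule.finrank_le _
      _ = Fintype.card (Σ v : Fin n → F, {d : Fin n →₀ ℕ // (∑ i, d i) < f v}) :=
          Module.finrank_fintype_fun_eq_card F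
      _ = ∑ v : Fin n → F, Fintype.card {d : Fin n →₀ ℕ // (∑ i, d i) < f v} :=
          Fintype.card_sigma
      _ = ∑ v : Fin n → F, Nat.choose (f v + n - 1) n := by
          refine Finset.sum_congr rfl fun v _ => ?_
          rw [← Nat.card_eq_fintype_card, nat_card_sum_lt n (f v) hn]
  have part1 : Module.finrank F p ≤ Module.finrank F (vanishingSpace F n D f) +
      ∑ v : Fin n → F, Nat.choose (f v + n - 1) n := by omega
  refine ⟨part1, fun hlt => ?_⟩
  have hfp : Module.finrank F p = Nat.choose (D + n) n := by
    haveI := finite_sum_le n D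
    haveI : Finite {d : Fin n →₀ ℕ // (d.sum fun _ e => e) ≤ D} := by
      have e : {d : Fin n →₀ ℕ // (d.sum fun _ e => e) ≤ D} ≃
          {d : Fin n →₀ ℕ // (∑ i, d i) ≤ D} :=
        Equiv.subtypeEquivRight (fun d => by
          rw [Finsupp.sum_fintype] ; intro ; rfl)
      exact Finite.of_equiv _ e.symm
    haveI : Finite ↥{d : Fin n →₀ ℕ | (d.sum fun _ e => e) ≤ D} :=
      ‹Finite {d : Fin n →₀ ℕ // (d.sum fun _ e => e) ≤ D}›
    haveI : Fintype ↥{d : Fin n →₀ ℕ | (d.sum fun _ e => e) ≤ D} := Fintype.ofFinite _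
    show Module.finrank F
      (MvPolynomial.restrictSupport F {d : Fin n →₀ ℕ | (d.sum fun _ e => e) ≤ D}) = _
    rw [Module.finrank_eq_card_basis
      (MvPolynomial.basisRestrictSupport F {d : Fin n →₀ ℕ | (d.sum fun _ e => e) ≤ D})]
    rw [← Nat.card_eq_fintype_card]
    have e : ↥{d : Fin n →₀ ℕ | (d.sum fun _ e => e) ≤ D} ≃
        {d : Fin n →₀ ℕ // (∑ i, d i) ≤ D} :=
      Equiv.subtypeEquivRight (fun d => by
        simp only [Set.mem_setOf_eq]
        rw [Finsupp.sum_fintype] ; intro ; rfl)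
    rw [Nat.card_congr e, nat_card_sum_le]
  have hpos : 0 < Module.finrank F (vanishingSpace F n D f) := by omega
  have hne : vanishingSpace F n D f ≠ ⊥ := by
    intro hbot
    rw [hbot, finrank_bot] at hpos
    exact lt_irrefl 0 hpos
  obtain ⟨P, hPmem, hP0⟩ := Submodule.exists_mem_ne_zero_of_ne_bot hne
  rw [hV, Submodule.mem_inf] at hPmem
  refine ⟨P, hP0, (MvPolynomial.mem_restrictTotalDegree (Fin n) D P).mp hPmem.1, ?_⟩
  intro v d hd
  have h2 := hPmem.2
  rw [LinearMap.mem_ker] at h2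
  have := congrFun h2 ⟨v, ⟨d, hd⟩⟩
  simpa [L, MvPolynomial.lcoeff_apply] using this
end
end

section
/- Let F be a finite field with q elements, k ≥ 1, and m ≥ 1. If Q is a polynomial in k variables over F of degree less than mq which vanishes to order at least m at every point of F^k, then Q = 0. -/
open MvPolynomial
open scoped BigOperators

namespace SZAux

variable {F : Type*} [Field F] {k : ℕ}

/-- weight (total degree) of an exponent vector -/
def wt (d : Fin k →₀ ℕ) : ℕ := ∑ i, d i

lemma wt_add (a b : Fin k →₀ ℕ) : wt (a + b) = wt a + wt b := by
  simp [wt, Finset.sum_add_distrib]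

lemma wt_single (i : Fin k) (n : ℕ) : wt (Finsupp.single i n) = n := by
  simp [wt, Finsupp.single_apply]

lemma wt_smul (q : ℕ) (b : Fin k →₀ ℕ) : wt (q • b) = q * wt b := by
  simp [wt, Finset.mul_sum]

lemma wt_eq_sum (d : Fin k →₀ ℕ) : (d.sum fun _ n => n) = wt d :=
  Finsupp.sum_fintype _ _ (fun _ => rfl)

lemma wt_tsub {a b : Fin k →₀ ℕ} (h : b ≤ a) : wt (a - b) = wt a - wt b := by
  have h1 : (a - b) + b = a := tsub_add_cancel_of_le h
  have h2 := congrArg wt h1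
  rw [wt_add] at h2
  omega

lemma wt_eq_zero {d : Fin k →₀ ℕ} (h : wt d = 0) : d = 0 := by
  rw [wt, Finset.sum_eq_zero_iff] at h
  ext i
  exact h i (Finset.mem_univ i)

/-- The basic products `x^e * ∏ (x_i^q - x_i)^{β i}`. -/
noncomputable def Yb (q : ℕ) (e β : Fin k →₀ ℕ) : MvPolynomial (Fin k) F :=
  monomial e 1 * β.prod fun i n => (X i ^ q - X i) ^ n

lemma Yb_zero (q : ℕ) (e : Fin k →₀ ℕ) : (Yb q e 0 : MvPolynomial (Fin k) F) = monomial e 1 := by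
  simp [Yb]

lemma Yb_succ (q : ℕ) (e β : Fin k →₀ ℕ) (i : Fin k) :
    (Yb q e (β + Finsupp.single i 1) : MvPolynomial (Fin k) F) = Yb q e β * (X i ^ q - X i) := by
  unfold Yb
  rw [Finsupp.prod_add_index' (fun j => pow_zero _) (fun j m n => pow_add _ _ _),
      Finsupp.prod_single_index
        (h := fun j n => ((X j : MvPolynomial (Fin k) F) ^ q - X j) ^ n) (pow_zero _),
      pow_one, mul_assoc]

lemma Yb_coeff (q : ℕ) (hq : 2 ≤ q) :
    ∀ (n : ℕ) (β e : Fin k →₀ ℕ), wt β = n →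
      coeff (e + q • β) (Yb q e β : MvPolynomial (Fin k) F) = 1 ∧
      ∀ d, coeff d (Yb q e β : MvPolynomial (Fin k) F) ≠ 0 →
        wt d ≤ wt e + q * wt β ∧ (wt d = wt e + q * wt β → d = e + q • β) := by
  intro n
  induction n with
  | zero =>
    intro β e hβ
    have hβ0 : β = 0 := wt_eq_zero hβ
    subst hβ0
    constructor
    · simp [Yb_zero, coeff_monomial]
    · intro d hd
      rw [Yb_zero, coeff_monomial] at hd
      have hed : e = d := by by_contra hne; simp [hne] at hd
      subst hed
      simp
  | succ n ih =>
    intro β e hβ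
    obtain ⟨i, hi⟩ : ∃ i, β i ≠ 0 := by
      by_contra hall
      push_neg at hall
      have : β = 0 := by ext j; simp [hall j]
      subst this
      simp [wt] at hβ
    set β' := β - Finsupp.single i 1 with hβ'def
    have hale : Finsupp.single i 1 ≤ β := Finsupp.single_le_iff.mpr (Nat.one_le_iff_ne_zero.mpr hi)
    have hsplit : β = β' + Finsupp.single i 1 := (tsub_add_cancel_of_le hale).symm
    have hwt' : wt β' = n := by
      rw [hβ'def, wt_tsub hale, wt_single, hβ]
      omega
    obtain ⟨ihtop, ihbound⟩ := ih β' e hwt'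
    have hY : (Yb q e β : MvPolynomial (Fin k) F) = Yb q e β' * (X i ^ q - X i) := by
      rw [hsplit, Yb_succ]
    have hXpow : (X i : MvPolynomial (Fin k) F) = monomial (Finsupp.single i 1) 1 := by
      rw [← X_pow_eq_monomial, pow_one]
    have hco : ∀ d, coeff d (Yb q e β : MvPolynomial (Fin k) F) =
        (if Finsupp.single i q ≤ d then coeff (d - Finsupp.single i q) (Yb q e β' : MvPolynomial (Fin k) F) else 0)
        - (if Finsupp.single i 1 ≤ d then coeff (d - Finsupp.single i 1) (Yb q e β' : MvPolynomial (Fin k) F) else 0) := by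
      intro d
      rw [hY, mul_sub, coeff_sub, X_pow_eq_monomial, coeff_mul_monomial', hXpow,
        coeff_mul_monomial']
      simp only [mul_one]
    have hqsmul : q • β = q • β' + Finsupp.single i q := by
      rw [hsplit, smul_add, Finsupp.smul_single, smul_eq_mul, mul_one]
    have hE : wt e + q * wt β = (wt e + q * wt β') + q := by
      rw [hβ, hwt']; ring
    constructor
    · -- top coefficient
      have hd0 : e + q • β = (e + q • β') + Finsupp.single i q := by
        rw [hqsmul, add_assoc]
      rw [hco, hd0]
      have hc1 : Finsupp.single i q ≤ (e + q • β') + Finsupp.single i q := le_add_self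
      rw [if_pos hc1, add_tsub_cancel_right, ihtop]
      have hB : (if Finsupp.single i 1 ≤ (e + q • β') + Finsupp.single i q then
          coeff ((e + q • β') + Finsupp.single i q - Finsupp.single i 1) (Yb q e β' : MvPolynomial (Fin k) F) else 0) = 0 := by
        split_ifs with h2
        · by_contra hne
          have hb := (ihbound _ hne).1
          have hle : Finsupp.single i 1 ≤ (e + q • β') + Finsupp.single i q := h2
          have hwtd : wt ((e + q • β') + Finsupp.single i q - Finsupp.single i 1)
              = wt e + q * wt β' + q - 1 := by
            rw [wt_tsub hle, wt_add, wt_add, wt_smul, wt_single, wt_single]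
          omega
        · rfl
      rw [hB, sub_zero]
    · -- bound and equality case
      intro d hd
      rw [hco d] at hd
      have hAB : (Finsupp.single i q ≤ d ∧
            coeff (d - Finsupp.single i q) (Yb q e β' : MvPolynomial (Fin k) F) ≠ 0) ∨
          (Finsupp.single i 1 ≤ d ∧
            coeff (d - Finsupp.single i 1) (Yb q e β' : MvPolynomial (Fin k) F) ≠ 0) := by
        by_contra hcon
        push_neg at hcon
        obtain ⟨h1, h2⟩ := hcon
        apply hd
        have e1 : (if Finsupp.single i q ≤ d then
            coeff (d - Finsupp.single i q) (Yb q e β' : MvPolynomial (Fin k) F) else 0) = 0 := by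
          split_ifs with h; · exact h1 h
          · rfl
        have e2 : (if Finsupp.single i 1 ≤ d then
            coeff (d - Finsupp.single i 1) (Yb q e β' : MvPolynomial (Fin k) F) else 0) = 0 := by
          split_ifs with h; · exact h2 h
          · rfl
        rw [e1, e2, sub_zero]
      have hbound : wt d ≤ wt e + q * wt β := by
        rw [hE]
        rcases hAB with ⟨h1, hA⟩ | ⟨h1, hA⟩
        · have := (ihbound _ hA).1
          have hwtd : wt (d - Finsupp.single i q) = wt d - q := by
            rw [wt_tsub h1, wt_single]
          have hqd : q ≤ wt d := by
            have := wt_tsub h1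
            have h2 : wt (Finsupp.single i q) ≤ wt d := by
              have h3 := congrArg wt (tsub_add_cancel_of_le h1)
              rw [wt_add] at h3
              omega
            rwa [wt_single] at h2
          omega
        · have := (ihbound _ hA).1
          have hwtd : wt (d - Finsupp.single i 1) = wt d - 1 := by
            rw [wt_tsub h1, wt_single]
          have hqd : 1 ≤ wt d := by
            have h3 := congrArg wt (tsub_add_cancel_of_le h1)
            rw [wt_add, wt_single] at h3
            omega
          omega
      refine ⟨hbound, ?_⟩
      intro heq
      -- in the equality case, the second branch is impossible
      rcases hAB with ⟨h1, hA⟩ | ⟨h1, hA⟩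
      · have hb := ihbound _ hA
        have hwtd : wt (d - Finsupp.single i q) = wt d - q := by
          rw [wt_tsub h1, wt_single]
        have hqd : q ≤ wt d := by
          have h3 := congrArg wt (tsub_add_cancel_of_le h1)
          rw [wt_add, wt_single] at h3
          omega
        have heq' : wt (d - Finsupp.single i q) = wt e + q * wt β' := by omega
        have hde : d - Finsupp.single i q = e + q • β' := hb.2 heq'
        have : d = (e + q • β') + Finsupp.single i q := by
          rw [← hde, tsub_add_cancel_of_le h1]
        rw [this, hqsmul, add_assoc]
      · exfalso
        have hb := (ihbound _ hA).1
        have hwtd : wt (d - Finsupp.single i 1) = wt d - 1 := by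
          rw [wt_tsub h1, wt_single]
        have hqd : 1 ≤ wt d := by
          have h3 := congrArg wt (tsub_add_cancel_of_le h1)
          rw [wt_add, wt_single] at h3
          omega
        omega

/-- index type for the reduced basis elements -/
def Idx (k q m : ℕ) : Type := {p : (Fin k →₀ ℕ) × (Fin k →₀ ℕ) // (∀ i, p.1 i < q) ∧ m ≤ wt p.2}

/-- span of reduced basis elements with at least `m` factors from the `y`'s -/
noncomputable def Vm (F : Type*) [Field F] (k q m : ℕ) : Submodule F (MvPolynomial (Fin k) F) :=
  Submodule.span F (Set.range fun p : Idx k q m => (Yb q p.1.1 p.1.2 : MvPolynomial (Fin k) F))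

lemma Yb_split (q : ℕ) (hq : 2 ≤ q) (a β : Fin k →₀ ℕ) (i : Fin k) (hi : q ≤ a i) :
    (Yb q a β : MvPolynomial (Fin k) F)
      = Yb q (a - Finsupp.single i q) (β + Finsupp.single i 1)
        + Yb q (a - Finsupp.single i (q - 1)) β := by
  rw [Yb_succ]
  unfold Yb
  have hle : Finsupp.single i q ≤ a := Finsupp.single_le_iff.mpr hi
  have h1 : (monomial (a - Finsupp.single i q) (1 : F)) * X i ^ q = monomial a 1 := by
    rw [X_pow_eq_monomial, monomial_mul, mul_one, tsub_add_cancel_of_le hle]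
  have hXone : (X i : MvPolynomial (Fin k) F) = monomial (Finsupp.single i 1) 1 := by
    rw [← X_pow_eq_monomial, pow_one]
  have h2 : (monomial (a - Finsupp.single i q) (1 : F)) * X i
      = monomial (a - Finsupp.single i (q - 1)) 1 := by
    rw [hXone, monomial_mul, mul_one]
    have harg : (a - Finsupp.single i q) + Finsupp.single i 1
        = a - Finsupp.single i (q - 1) := by
      ext j
      by_cases hj : i = j
      · subst hj
        rw [Finsupp.add_apply, Finsupp.tsub_apply, Finsupp.tsub_apply,
          Finsupp.single_eq_same, Finsupp.single_eq_same, Finsupp.single_eq_same]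
        omega
      · rw [Finsupp.add_apply, Finsupp.tsub_apply, Finsupp.tsub_apply,
          Finsupp.single_eq_of_ne' hj, Finsupp.single_eq_of_ne' hj, Finsupp.single_eq_of_ne' hj]
        omega
    rw [harg]
  calc monomial a (1 : F) * β.prod (fun i n => (X i ^ q - X i) ^ n)
      = (monomial (a - Finsupp.single i q) (1 : F) * X i ^ q)
          * β.prod (fun i n => (X i ^ q - X i) ^ n) := by rw [h1]
    _ = monomial (a - Finsupp.single i q) (1 : F)
          * β.prod (fun i n => (X i ^ q - X i) ^ n) * (X i ^ q - X i)
        + (monomial (a - Finsupp.single i q) (1 : F) * X i)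
          * β.prod (fun i n => (X i ^ q - X i) ^ n) := by ring
    _ = monomial (a - Finsupp.single i q) (1 : F)
          * β.prod (fun i n => (X i ^ q - X i) ^ n) * (X i ^ q - X i)
        + monomial (a - Finsupp.single i (q - 1)) (1 : F)
          * β.prod (fun i n => (X i ^ q - X i) ^ n) := by rw [h2]

lemma Yb_mem_Vm (q m : ℕ) (hq : 2 ≤ q) :
    ∀ (n : ℕ) (a β : Fin k →₀ ℕ), wt a ≤ n → m ≤ wt β →
      (Yb q a β : MvPolynomial (Fin k) F) ∈ Vm F k q m := by
  intro n
  induction n using Nat.strong_induction_on with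
  | _ n ihn =>
    intro a β han hmb
    by_cases hsmall : ∀ i, a i < q
    · exact Submodule.subset_span ⟨⟨(a, β), hsmall, hmb⟩, rfl⟩
    · push_neg at hsmall
      obtain ⟨i, hi⟩ := hsmall
      have hwa : q ≤ wt a := by
        have : a i ≤ wt a := by
          rw [wt]
          exact Finset.single_le_sum (fun j _ => Nat.zero_le _) (Finset.mem_univ i)
        omega
      have hn1 : n - 1 < n := by omega
      have hle : Finsupp.single i q ≤ a := Finsupp.single_le_iff.mpr hi
      have hle' : Finsupp.single i (q - 1) ≤ a := Finsupp.single_le_iff.mpr (by omega)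
      rw [Yb_split q hq a β i hi]
      apply Submodule.add_mem
      · apply ihn (n - 1) hn1
        · rw [wt_tsub hle, wt_single]; omega
        · rw [wt_add, wt_single]; omega
      · apply ihn (n - 1) hn1
        · rw [wt_tsub hle', wt_single]; omega
        · exact hmb

lemma mul_Yb_mem (q m : ℕ) (hq : 2 ≤ q) (t : MvPolynomial (Fin k) F) (e β : Fin k →₀ ℕ)
    (hm : m ≤ wt β) : t * Yb q e β ∈ Vm F k q m := by
  rw [show t * Yb q e β
      = ∑ a ∈ t.support, (monomial a (coeff a t) : MvPolynomial (Fin k) F) * Yb q e β from by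
    rw [← Finset.sum_mul, ← t.as_sum]]
  apply Submodule.sum_mem
  intro a _
  have hterm : (monomial a (coeff a t) : MvPolynomial (Fin k) F) * Yb q e β
      = (coeff a t) • Yb q (a + e) β := by
    unfold Yb
    rw [smul_eq_C_mul, ← mul_assoc, ← mul_assoc, monomial_mul, C_mul_monomial]
    try simp
  rw [hterm]
  exact Submodule.smul_mem _ _ (Yb_mem_Vm q m hq (wt (a + e)) (a + e) β le_rfl hm)

lemma mem_I_mul_Yb (q m : ℕ) (hq : 2 ≤ q) (e β : Fin k →₀ ℕ) (hm : m ≤ wt β)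
    (s : MvPolynomial (Fin k) F)
    (hs : s ∈ Ideal.span (Set.range fun i => (X i ^ q - X i : MvPolynomial (Fin k) F))) :
    ∀ t : MvPolynomial (Fin k) F, t * s * Yb q e β ∈ Vm F k q (m + 1) := by
  induction hs using Submodule.span_induction with
  | mem x hx =>
    obtain ⟨i, rfl⟩ := hx
    intro t
    have hrw : t * (X i ^ q - X i) * Yb q e β = t * Yb q e (β + Finsupp.single i 1) := by
      rw [Yb_succ]; try ring
    rw [hrw]
    apply mul_Yb_mem q (m + 1) hq
    rw [wt_add, wt_single]
    omega
  | zero =>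
    intro t
    rw [mul_zero, zero_mul]
    exact Submodule.zero_mem _
  | add x y hx hy ihx ihy =>
    intro t
    have : t * (x + y) * Yb q e β = t * x * Yb q e β + t * y * Yb q e β := by ring
    rw [this]
    exact Submodule.add_mem _ (ihx t) (ihy t)
  | smul c x hx ihx =>
    intro t
    have : t * (c • x) * Yb q e β = (t * c) * x * Yb q e β := by
      rw [smul_eq_mul]; ring
    rw [this]
    exact ihx (t * c)

lemma Vm_mul_I_mem (q m : ℕ) (hq : 2 ≤ q) (r : MvPolynomial (Fin k) F)
    (hr : r ∈ Vm F k q m) (s : MvPolynomial (Fin k) F)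
    (hs : s ∈ Ideal.span (Set.range fun i => (X i ^ q - X i : MvPolynomial (Fin k) F))) :
    r * s ∈ Vm F k q (m + 1) := by
  induction hr using Submodule.span_induction with
  | mem x hx =>
    obtain ⟨p, rfl⟩ := hx
    have := mem_I_mul_Yb q m hq p.1.1 p.1.2 p.2.2 s hs 1
    rw [one_mul] at this
    rwa [mul_comm]
  | zero =>
    rw [zero_mul]; exact Submodule.zero_mem _
  | add x y hx hy ihx ihy =>
    rw [add_mul]; exact Submodule.add_mem _ ihx ihy
  | smul c x hx ihx =>
    rw [smul_mul_assoc]; exact Submodule.smul_mem _ _ ihx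

lemma Ipow_le_Vm (q : ℕ) (hq : 2 ≤ q) (m : ℕ) :
    ∀ P : MvPolynomial (Fin k) F,
      P ∈ (Ideal.span (Set.range fun i => (X i ^ q - X i : MvPolynomial (Fin k) F))) ^ m →
      P ∈ Vm F k q m := by
  induction m with
  | zero =>
    intro P _
    have h1 : (Yb q 0 0 : MvPolynomial (Fin k) F) = 1 := by
      rw [Yb_zero]
      simp [monomial_eq]
    have h2 : P = P * Yb q 0 0 := by rw [h1, mul_one]
    rw [h2]
    exact mul_Yb_mem q 0 hq P 0 0 (Nat.zero_le _)
  | succ m ihm =>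
    intro P hP
    rw [pow_succ] at hP
    exact Submodule.mul_induction_on hP
      (fun r hr s hs => Vm_mul_I_mem q m hq r (ihm r hr) s hs)
      (fun x y hx hy => Submodule.add_mem _ hx hy)

lemma digit_uniq {q : ℕ} (hq : 0 < q) {e e' β β' : Fin k →₀ ℕ}
    (he : ∀ i, e i < q) (he' : ∀ i, e' i < q)
    (h : e + q • β = e' + q • β') : e = e' ∧ β = β' := by
  have hco : ∀ i, e i + q * β i = e' i + q * β' i := by
    intro i
    have := congrArg (fun f : Fin k →₀ ℕ => f i) h
    simpa [Finsupp.add_apply, Finsupp.smul_apply, smul_eq_mul] using this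
  have hee : ∀ i, e i = e' i := by
    intro i
    have h1 := hco i
    have h2 : (e i + q * β i) % q = e i := by
      rw [Nat.add_mul_mod_self_left, Nat.mod_eq_of_lt (he i)]
    have h3 : (e' i + q * β' i) % q = e' i := by
      rw [Nat.add_mul_mod_self_left, Nat.mod_eq_of_lt (he' i)]
    rw [← h2, ← h3, h1]
  constructor
  · ext i; exact hee i
  · ext i
    have h1 := hco i
    have h2 := hee i
    have h3 : q * β i = q * β' i := by omega
    exact Nat.eq_of_mul_eq_mul_left hq h3

lemma wt_le_totalDegree {P : MvPolynomial (Fin k) F} {d : Fin k →₀ ℕ}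
    (h : coeff d P ≠ 0) : wt d ≤ P.totalDegree := by
  have := le_totalDegree (p := P) (s := d) (mem_support_iff.mpr h)
  rwa [wt_eq_sum] at this

lemma totalDegree_ge_of_mem_Vm (q m : ℕ) (hq : 2 ≤ q) {Q : MvPolynomial (Fin k) F}
    (hQ : Q ∈ Vm F k q m) (h0 : Q ≠ 0) : m * q ≤ Q.totalDegree := by
  obtain ⟨c, hc⟩ := Finsupp.mem_span_range_iff_exists_finsupp.mp hQ
  have hcne : c.support.Nonempty := by
    rcases Finset.eq_empty_or_nonempty c.support with hemp | hne
    · exfalso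
      apply h0
      rw [← hc, Finsupp.sum, hemp, Finset.sum_empty]
    · exact hne
  obtain ⟨p0, hp0s, hp0max⟩ :=
    Finset.exists_max_image c.support (fun p : Idx k q m => wt p.1.1 + q * wt p.1.2) hcne
  set d0 := p0.1.1 + q • p0.1.2 with hd0
  have hwt0 : wt d0 = wt p0.1.1 + q * wt p0.1.2 := by rw [hd0, wt_add, wt_smul]
  have hcoeff : coeff d0 Q = c p0 := by
    rw [← hc, Finsupp.sum, coeff_sum]
    rw [Finset.sum_eq_single p0]
    · rw [coeff_smul, hd0, (Yb_coeff q hq (wt p0.1.2) p0.1.2 p0.1.1 rfl).1,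
        smul_eq_mul, mul_one]
    · intro p hp hne
      rw [coeff_smul]
      have hzero : coeff d0 (Yb q p.1.1 p.1.2 : MvPolynomial (Fin k) F) = 0 := by
        by_contra hco
        obtain ⟨hb, heqc⟩ := (Yb_coeff q hq (wt p.1.2) p.1.2 p.1.1 rfl).2 d0 hco
        have hle : wt p.1.1 + q * wt p.1.2 ≤ wt p0.1.1 + q * wt p0.1.2 := hp0max p hp
        have heq2 : wt d0 = wt p.1.1 + q * wt p.1.2 := by omega
        have hde : d0 = p.1.1 + q • p.1.2 := heqc heq2
        have := digit_uniq (by omega : 0 < q) p0.2.1 p.2.1 (by rw [← hd0, hde])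
        apply hne
        apply Subtype.ext
        exact Prod.ext this.1.symm this.2.symm
      rw [hzero, smul_zero]
    · intro hns
      exact absurd hp0s hns
  have hcp0 : c p0 ≠ 0 := Finsupp.mem_support_iff.mp hp0s
  have hwtd : wt d0 ≤ Q.totalDegree := wt_le_totalDegree (by rw [hcoeff]; exact hcp0)
  have hmb : m ≤ wt p0.1.2 := p0.2.2
  have : m * q ≤ wt d0 := by
    rw [hwt0]
    calc m * q = q * m := Nat.mul_comm m q
      _ ≤ q * wt p0.1.2 := Nat.mul_le_mul_left q hmb
      _ ≤ wt p0.1.1 + q * wt p0.1.2 := Nat.le_add_left _ _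
  omega

section PartB

variable [Fintype F]

lemma sub_single_add_single {a : Fin k →₀ ℕ} {i : Fin k} {q : ℕ} (hq : 1 ≤ q) (hi : q ≤ a i) :
    (a - Finsupp.single i q) + Finsupp.single i 1 = a - Finsupp.single i (q - 1) := by
  ext j
  by_cases hj : i = j
  · subst hj
    rw [Finsupp.add_apply, Finsupp.tsub_apply, Finsupp.tsub_apply,
      Finsupp.single_eq_same, Finsupp.single_eq_same, Finsupp.single_eq_same]
    omega
  · rw [Finsupp.add_apply, Finsupp.tsub_apply, Finsupp.tsub_apply,
      Finsupp.single_eq_of_ne' hj, Finsupp.single_eq_of_ne' hj, Finsupp.single_eq_of_ne' hj]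
    omega

/-- the maximal ideal at a point -/
noncomputable def mIdeal (v : Fin k → F) : Ideal (MvPolynomial (Fin k) F) :=
  Ideal.span (Set.range fun i => X i - C (v i))

lemma prod_pow_mem_pow {J : Ideal (MvPolynomial (Fin k) F)} {f : Fin k → MvPolynomial (Fin k) F}
    (hf : ∀ i, f i ∈ J) (d : Fin k →₀ ℕ) (s : Finset (Fin k)) :
    (∏ i ∈ s, f i ^ d i) ∈ J ^ (∑ i ∈ s, d i) := by
  classical
  induction s using Finset.induction_on with
  | empty =>
    rw [Finset.prod_empty, Finset.sum_empty, pow_zero, Ideal.one_eq_top]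
    exact Submodule.mem_top
  | @insert a s ha ih =>
    rw [Finset.prod_insert ha, Finset.sum_insert ha, pow_add]
    exact Ideal.mul_mem_mul (Ideal.pow_mem_pow (hf _) _) ih

lemma mem_mIdeal_pow (m : ℕ) (Q : MvPolynomial (Fin k) F) (v : Fin k → F)
    (hv : ∀ d : Fin k →₀ ℕ, wt d < m →
      coeff d (MvPolynomial.aeval (fun i => X i + C (v i)) Q) = 0) :
    Q ∈ (mIdeal v) ^ m := by
  set Pv := MvPolynomial.aeval (fun i => X i + C (v i)) Q with hPvdef
  have hcomp : (MvPolynomial.aeval (fun i => X i - C (v i)) :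
      MvPolynomial (Fin k) F →ₐ[F] MvPolynomial (Fin k) F) Pv = Q := by
    rw [hPvdef, ← AlgHom.comp_apply]
    have hcc : (MvPolynomial.aeval (fun i => (X i - C (v i) : MvPolynomial (Fin k) F))).comp
        (MvPolynomial.aeval (fun i => (X i + C (v i) : MvPolynomial (Fin k) F)))
        = AlgHom.id F (MvPolynomial (Fin k) F) := by
      apply algHom_ext
      intro i
      simp
    rw [hcc, AlgHom.id_apply]
  rw [← hcomp, Pv.as_sum, map_sum]
  apply Submodule.sum_mem
  intro d hd
  rw [aeval_monomial]
  have hwd : m ≤ wt d := by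
    by_contra h
    push_neg at h
    exact (mem_support_iff.mp hd) (hv d h)
  have hprod : (d.prod fun i n => ((X i - C (v i)) : MvPolynomial (Fin k) F) ^ n)
      ∈ (mIdeal v) ^ (wt d) := by
    rw [Finsupp.prod_fintype _ _ (fun i => pow_zero _)]
    exact prod_pow_mem_pow (fun i => Ideal.subset_span (Set.mem_range_self i)) d Finset.univ
  have hle : (mIdeal v) ^ (wt d) ≤ (mIdeal v) ^ m := Ideal.pow_le_pow_right hwd
  exact Ideal.mul_mem_left _ _ (hle hprod)

lemma crt_pow {R : Type*} [CommRing R] {ι : Type*} (f : ι → Ideal R) (m : ℕ)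
    (s : Finset ι) (hcop : ∀ i ∈ s, ∀ j ∈ s, i ≠ j → IsCoprime (f i) (f j))
    (Q : R) (hQ : ∀ i ∈ s, Q ∈ f i ^ m) : Q ∈ (∏ i ∈ s, f i) ^ m := by
  classical
  induction s using Finset.induction_on with
  | empty =>
    rw [Finset.prod_empty, one_pow, Ideal.one_eq_top]
    exact Submodule.mem_top
  | @insert a s ha ih =>
    have hcop' : IsCoprime (f a) (∏ i ∈ s, f i) :=
      IsCoprime.prod_right fun j hj =>
        hcop a (Finset.mem_insert_self a s) j (Finset.mem_insert_of_mem hj)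
          (by rintro rfl; exact ha hj)
    have h1 : Q ∈ f a ^ m := hQ a (Finset.mem_insert_self a s)
    have h2 : Q ∈ (∏ i ∈ s, f i) ^ m :=
      ih (fun i hi j hj hij =>
          hcop i (Finset.mem_insert_of_mem hi) j (Finset.mem_insert_of_mem hj) hij)
        (fun i hi => hQ i (Finset.mem_insert_of_mem hi))
    have hcp : IsCoprime ((f a) ^ m) ((∏ i ∈ s, f i) ^ m) := hcop'.pow
    rw [Finset.prod_insert ha, mul_pow,
      Ideal.mul_eq_inf_of_coprime (Ideal.isCoprime_iff_sup_eq.mp hcp)]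
    exact Submodule.mem_inf.mpr ⟨h1, h2⟩

lemma mIdeal_coprime {v w : Fin k → F} (hvw : v ≠ w) : IsCoprime (mIdeal v) (mIdeal w) := by
  rw [Ideal.isCoprime_iff_sup_eq]
  obtain ⟨i, hi⟩ : ∃ i, v i ≠ w i := by
    by_contra h
    push_neg at h
    exact hvw (funext h)
  have h1 : (X i - C (v i) : MvPolynomial (Fin k) F) ∈ mIdeal v ⊔ mIdeal w :=
    Submodule.mem_sup_left (Ideal.subset_span ⟨i, rfl⟩)
  have h2 : (X i - C (w i) : MvPolynomial (Fin k) F) ∈ mIdeal v ⊔ mIdeal w :=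
    Submodule.mem_sup_right (Ideal.subset_span ⟨i, rfl⟩)
  have h3 : (C (w i - v i) : MvPolynomial (Fin k) F) ∈ mIdeal v ⊔ mIdeal w := by
    have hcc : (C (w i - v i) : MvPolynomial (Fin k) F)
        = (X i - C (v i)) - (X i - C (w i)) := by
      rw [map_sub]
      ring
    rw [hcc]
    exact Submodule.sub_mem _ h1 h2
  have hne : w i - v i ≠ 0 := sub_ne_zero.mpr (Ne.symm hi)
  rw [Ideal.eq_top_iff_one]
  have hone : (1 : MvPolynomial (Fin k) F) = C (w i - v i)⁻¹ * C (w i - v i) := by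
    rw [← C_mul, inv_mul_cancel₀ hne, C_1]
  rw [hone]
  exact Ideal.mul_mem_left _ _ h3

lemma monomial_red_coord (i : Fin k) :
    ∀ (n : ℕ) (a : Fin k →₀ ℕ), a i = n →
      ∃ a' : Fin k →₀ ℕ, a' i < Fintype.card F ∧ (∀ j, j ≠ i → a' j = a j) ∧
        (monomial a (1 : F) - monomial a' 1)
          ∈ Ideal.span (Set.range fun i =>
              (X i ^ (Fintype.card F) - X i : MvPolynomial (Fin k) F)) := by
  intro n
  induction n using Nat.strong_induction_on with
  | _ n ihn =>
    intro a ha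
    have hq : 2 ≤ Fintype.card F := Fintype.one_lt_card
    set q := Fintype.card F with hqdef
    by_cases hn : a i < q
    · exact ⟨a, hn, fun j _ => rfl, by rw [sub_self]; exact Submodule.zero_mem _⟩
    · push_neg at hn
      set b := a - Finsupp.single i (q - 1) with hb
      have hbi : b i = a i - (q - 1) := by
        rw [hb, Finsupp.tsub_apply, Finsupp.single_eq_same]
      have hbn : b i < n := by omega
      obtain ⟨a', h1, h2, h3⟩ := ihn (b i) (by omega) b rfl
      have hle : Finsupp.single i q ≤ a := Finsupp.single_le_iff.mpr hn
      refine ⟨a', h1, ?_, ?_⟩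
      · intro j hj
        rw [h2 j hj, hb, Finsupp.tsub_apply, Finsupp.single_eq_of_ne' (Ne.symm hj),
          Nat.sub_zero]
      · have hXone : (X i : MvPolynomial (Fin k) F) = monomial (Finsupp.single i 1) 1 := by
          rw [← X_pow_eq_monomial, pow_one]
        have hmul : (monomial (a - Finsupp.single i q) (1 : F)) * (X i ^ q - X i)
            = monomial a 1 - monomial b 1 := by
          rw [mul_sub, X_pow_eq_monomial, monomial_mul, mul_one,
            tsub_add_cancel_of_le hle, hXone, monomial_mul, mul_one,
            sub_single_add_single (by omega) hn, hb]
        have hstep : (monomial a (1 : F) - monomial b 1)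
            ∈ Ideal.span (Set.range fun i =>
                (X i ^ q - X i : MvPolynomial (Fin k) F)) := by
          rw [← hmul]
          exact Ideal.mul_mem_left _ _ (Ideal.subset_span ⟨i, rfl⟩)
        have hsum := Submodule.add_mem _ hstep h3
        rwa [sub_add_sub_cancel] at hsum

lemma monomial_red (s : Finset (Fin k)) :
    ∀ a : Fin k →₀ ℕ, ∃ a' : Fin k →₀ ℕ,
      (∀ i ∈ s, a' i < Fintype.card F) ∧ (∀ i ∉ s, a' i = a i) ∧
      (monomial a (1 : F) - monomial a' 1)
        ∈ Ideal.span (Set.range fun i =>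
            (X i ^ (Fintype.card F) - X i : MvPolynomial (Fin k) F)) := by
  classical
  induction s using Finset.induction_on with
  | empty =>
    intro a
    exact ⟨a, by simp, fun _ _ => rfl, by rw [sub_self]; exact Submodule.zero_mem _⟩
  | @insert i s hi ih =>
    intro a
    obtain ⟨a2, h1, h2, h3⟩ := monomial_red_coord (F := F) i (a i) a rfl
    obtain ⟨a', g1, g2, g3⟩ := ih a2
    refine ⟨a', ?_, ?_, ?_⟩
    · intro j hj
      rcases Finset.mem_insert.mp hj with rfl | hj'
      · rw [g2 j hi]
        exact h1
      · exact g1 j hj'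
    · intro j hj
      rw [Finset.mem_insert] at hj
      push_neg at hj
      rw [g2 j hj.2, h2 j hj.1]
    · have hsum := Submodule.add_mem _ h3 g3
      rwa [sub_add_sub_cancel] at hsum

lemma vanish_mem_I (P : MvPolynomial (Fin k) F) (hP : ∀ v : Fin k → F, eval v P = 0) :
    P ∈ Ideal.span (Set.range fun i =>
        (X i ^ (Fintype.card F) - X i : MvPolynomial (Fin k) F)) := by
  classical
  choose r hr1 hr2 hr3 using fun a : Fin k →₀ ℕ => monomial_red (F := F) Finset.univ a
  set P' : MvPolynomial (Fin k) F := ∑ a ∈ P.support, monomial (r a) (coeff a P) with hP'def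
  have hdiff : P - P' ∈ Ideal.span (Set.range fun i =>
      (X i ^ (Fintype.card F) - X i : MvPolynomial (Fin k) F)) := by
    have hsplit : P - P'
        = ∑ a ∈ P.support, (monomial a (coeff a P) - monomial (r a) (coeff a P)) := by
      rw [hP'def, Finset.sum_sub_distrib, ← P.as_sum]
    rw [hsplit]
    apply Submodule.sum_mem
    intro a _
    have hterm : monomial a (coeff a P) - monomial (r a) (coeff a P)
        = C (coeff a P) * (monomial a 1 - monomial (r a) 1) := by
      rw [mul_sub, C_mul_monomial, C_mul_monomial, mul_one]
    rw [hterm]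
    exact Ideal.mul_mem_left _ _ (hr3 a)
  have hIvanish : ∀ g ∈ Ideal.span (Set.range fun i =>
      (X i ^ (Fintype.card F) - X i : MvPolynomial (Fin k) F)),
      ∀ v : Fin k → F, eval v g = 0 := by
    intro g hg v
    have hker : Ideal.span (Set.range fun i =>
        (X i ^ (Fintype.card F) - X i : MvPolynomial (Fin k) F))
        ≤ RingHom.ker (eval v : MvPolynomial (Fin k) F →+* F) := by
      rw [Ideal.span_le]
      rintro _ ⟨i, rfl⟩
      simp [RingHom.mem_ker, FiniteField.pow_card]
    exact RingHom.mem_ker.mp (hker hg)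
  have hP'van : ∀ v : Fin k → F, eval v P' = 0 := by
    intro v
    have hv := hIvanish _ hdiff v
    rw [map_sub, hP v, zero_sub, neg_eq_zero] at hv
    exact hv
  have hP'res : P' ∈ restrictDegree (Fin k) F (Fintype.card F - 1) := by
    rw [hP'def]
    apply Submodule.sum_mem
    intro a _
    rw [mem_restrictDegree]
    intro s hs i
    have hss := support_monomial_subset hs
    rw [Finset.mem_singleton] at hss
    subst hss
    have := hr1 a i (Finset.mem_univ i)
    omega
  -- transfer to variables in the same universe as `F` via `rename`
  have hP'0 : P' = 0 := by
    set e : Fin k ≃ ULift.{u_1} (Fin k) := Equiv.ulift.symm with hedef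
    set P'' : MvPolynomial (ULift.{u_1} (Fin k)) F := rename e P' with hP''def
    have hvan'' : ∀ w : ULift.{u_1} (Fin k) → F, eval w P'' = 0 := by
      intro w
      rw [hP''def, eval_rename]
      exact hP'van _
    have hres'' : P'' ∈ restrictDegree (ULift.{u_1} (Fin k)) F (Fintype.card F - 1) := by
      rw [mem_restrictDegree]
      intro s hs i
      rw [hP''def, support_rename_of_injective e.injective] at hs
      obtain ⟨t, ht, rfl⟩ := Finset.mem_image.mp hs
      rw [mem_restrictDegree] at hP'res
      have hii : i = e (e.symm i) := (e.apply_symm_apply i).symm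
      rw [hii, Finsupp.mapDomain_apply e.injective]
      exact hP'res t ht _
    have h0'' : P'' = 0 := eq_zero_of_eval_eq_zero (ULift.{u_1} (Fin k)) F P'' hvan'' hres''
    have := rename_injective (R := F) e e.injective
    apply this
    rw [map_zero, ← hP''def]
    exact h0''
  rw [hP'0, sub_zero] at hdiff
  exact hdiff

end PartB

end SZAux

/-- **Multiplicity Schwarz–Zippel**: a polynomial in `k` variables over a finite field `F`
with `q` elements, of degree less than `m·q`, vanishing to order at least `m` at every
point of `F^k`, is identically zero. -/
theorem schwarz_zippel_multiplicity (F : Type*) [Field F] [Fintype F] (k m : ℕ)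
    (hk : 1 ≤ k) (hm : 1 ≤ m) (Q : MvPolynomial (Fin k) F)
    (hdeg : Q.totalDegree < m * Fintype.card F)
    (hvan : ∀ (v : Fin k → F) (d : Fin k →₀ ℕ), (∑ i, d i) < m →
      coeff d (MvPolynomial.aeval (fun i => X i + C (v i)) Q) = 0) :
    Q = 0 := by
  classical
  by_contra h0
  have hq : 2 ≤ Fintype.card F := Fintype.one_lt_card
  have hmem : ∀ v : Fin k → F, Q ∈ SZAux.mIdeal v ^ m := by
    intro v
    apply SZAux.mem_mIdeal_pow
    intro d hd
    exact hvan v d hd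
  have hcrt : Q ∈ (∏ v ∈ Finset.univ, SZAux.mIdeal v) ^ m :=
    SZAux.crt_pow _ m Finset.univ (fun v _ w _ hvw => SZAux.mIdeal_coprime hvw) Q
      (fun v _ => hmem v)
  have hprodle : (∏ v ∈ Finset.univ, SZAux.mIdeal v : Ideal (MvPolynomial (Fin k) F))
      ≤ Ideal.span (Set.range fun i =>
          (X i ^ (Fintype.card F) - X i : MvPolynomial (Fin k) F)) := by
    refine le_trans Ideal.prod_le_inf ?_
    intro P hP
    apply SZAux.vanish_mem_I
    intro v
    have hinf : (Finset.univ.inf fun w : Fin k → F => SZAux.mIdeal w) ≤ SZAux.mIdeal v :=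
      Finset.inf_le (Finset.mem_univ v)
    have hPv : P ∈ SZAux.mIdeal v := hinf hP
    have hker : SZAux.mIdeal v ≤ RingHom.ker (eval v : MvPolynomial (Fin k) F →+* F) := by
      rw [SZAux.mIdeal, Ideal.span_le]
      rintro _ ⟨i, rfl⟩
      simp [RingHom.mem_ker]
    exact RingHom.mem_ker.mp (hker hPv)
  have hQI : Q ∈ (Ideal.span (Set.range fun i =>
      (X i ^ (Fintype.card F) - X i : MvPolynomial (Fin k) F))) ^ m :=
    (Ideal.pow_right_mono hprodle m) hcrt
  have hdegge : m * Fintype.card F ≤ Q.totalDegree :=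
    SZAux.totalDegree_ge_of_mem_Vm (Fintype.card F) m hq
      (SZAux.Ipow_le_Vm (Fintype.card F) hq m Q hQI) h0
  omega
end

section
/- Let R = F[x]/(x^k), 𝔪 = (x), and let φ : R^n → F^{nk} be an F-linear isomorphism. For every nonzero v ∈ F^{nk} there exists v_0 ∈ R^n \ 𝔪^n such that φ^{-1}(v) ∈ R·v_0; consequently, if E ⊆ R^n contains a line a + R v_0 for every v_0 ∈ R^n \ 𝔪^n, then φ(E) ⊆ F^{nk} contains an F-line in every direction. -/
set_option synthInstance.maxHeartbeats 1000000
set_option maxHeartbeats 1000000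


/-- The ring `R = F[x]/(x^k)`. -/
abbrev QuotRing (F : Type*) [Field F] (k : ℕ) : Type _ :=
  Polynomial F ⧸ Ideal.span {(Polynomial.X : Polynomial F) ^ k}

/-- The maximal ideal `𝔪 = (x)` of `F[x]/(x^k)`. -/
noncomputable abbrev maxIdl (F : Type*) [Field F] (k : ℕ) : Ideal (QuotRing F k) :=
  Ideal.span {Ideal.Quotient.mk (Ideal.span {(Polynomial.X : Polynomial F) ^ k}) Polynomial.X}

/-- Lifting directions through an `F`-linear isomorphism `φ : R^n ≃ F^{nk}` where
`R = F[x]/(x^k)`: every nonzero `v ∈ F^{nk}` satisfies `φ⁻¹(v) ∈ R·v₀` for some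
`v₀ ∈ R^n \ 𝔪^n`; consequently if `E ⊆ R^n` contains a line in every direction then
`φ(E)` contains an `F`-line in every direction. -/
theorem lift_directions_through_iso (F : Type) [Field F] (n k : ℕ) (hn : 1 ≤ n) (hk : 1 ≤ k)
    (φ : (Fin n → QuotRing F k) ≃ₗ[F] (Fin (n * k) → F)) :
    (∀ v : Fin (n * k) → F, v ≠ 0 →
      ∃ v₀ : Fin n → QuotRing F k, (∃ i, v₀ i ∉ maxIdl F k) ∧
        ∃ t : QuotRing F k, φ.symm v = fun i => t * v₀ i) ∧
    (∀ E : Set (Fin n → QuotRing F k),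
      (∀ v₀ : Fin n → QuotRing F k, (∃ i, v₀ i ∉ maxIdl F k) →
        ∃ a : Fin n → QuotRing F k, ∀ t : QuotRing F k, (fun i => a i + t * v₀ i) ∈ E) →
      ∀ v : Fin (n * k) → F, v ≠ 0 →
        ∃ w : Fin (n * k) → F, ∀ t : F, w + t • v ∈ φ '' E) := by
  classical
  set x : QuotRing F k :=
    Ideal.Quotient.mk (Ideal.span {(Polynomial.X : Polynomial F) ^ k}) Polynomial.X with hxdef
  have hxk : x ^ k = 0 := by
    rw [hxdef, ← map_pow, Ideal.Quotient.eq_zero_iff_mem]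
    exact Ideal.subset_span rfl
  have hpow : ∀ m : ℕ, maxIdl F k ^ m = Ideal.span {x ^ m} := fun m =>
    Ideal.span_singleton_pow _ m
  have key : ∀ v : Fin (n * k) → F, v ≠ 0 →
      ∃ v₀ : Fin n → QuotRing F k, (∃ i, v₀ i ∉ maxIdl F k) ∧
        ∃ t : QuotRing F k, φ.symm v = fun i => t * v₀ i := by
    intro v hv
    set u := φ.symm v with hu
    have hu0 : u ≠ 0 := by
      intro h
      apply hv
      have := congrArg φ h
      simpa [hu] using this
    have hPk : ∃ i, u i ∉ maxIdl F k ^ k := by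
      obtain ⟨i, hi⟩ := Function.ne_iff.mp hu0
      refine ⟨i, ?_⟩
      rw [hpow, hxk, Ideal.span_singleton_eq_bot.mpr rfl]
      simpa using hi
    have hPex : ∃ m, ∃ i, u i ∉ maxIdl F k ^ m := ⟨k, hPk⟩
    set m' := Nat.find hPex with hm'def
    obtain ⟨i₀, hi₀⟩ : ∃ i, u i ∉ maxIdl F k ^ m' := Nat.find_spec hPex
    have hm'pos : 1 ≤ m' := by
      rcases Nat.eq_zero_or_pos m' with h | h
      · exfalso
        rw [h] at hi₀
        simp [pow_zero, Ideal.one_eq_top] at hi₀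
      · exact h
    have hall : ∀ i, u i ∈ maxIdl F k ^ (m' - 1) := by
      intro i
      by_contra h
      exact Nat.find_min hPex (Nat.sub_lt hm'pos one_pos) ⟨i, h⟩
    have hch : ∀ i, ∃ w : QuotRing F k, w * x ^ (m' - 1) = u i := by
      intro i
      have := hall i
      rw [hpow] at this
      exact Ideal.mem_span_singleton'.mp this
    choose w hw using hch
    refine ⟨w, ⟨i₀, ?_⟩, x ^ (m' - 1), ?_⟩
    · intro hmem
      apply hi₀
      obtain ⟨c, hc⟩ := Ideal.mem_span_singleton'.mp hmem
      rw [hpow]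
      refine Ideal.mem_span_singleton'.mpr ⟨c, ?_⟩
      have hmeq : m' = (m' - 1) + 1 := (Nat.succ_pred_eq_of_pos hm'pos).symm
      rw [hmeq, pow_succ]
      calc c * (x ^ (m' - 1) * x) = (c * x) * x ^ (m' - 1) := by ring
        _ = w i₀ * x ^ (m' - 1) := by rw [hc]
        _ = u i₀ := hw i₀
    · funext j
      rw [show u j = w j * x ^ (m' - 1) from (hw j).symm]
      ring
  refine ⟨key, ?_⟩
  intro E hE v hv
  obtain ⟨v₀, hv₀, t, ht⟩ := key v hv
  obtain ⟨a, ha⟩ := hE v₀ hv₀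
  refine ⟨φ a, fun c => ?_⟩
  refine ⟨fun i => a i + (algebraMap F (QuotRing F k) c * t) * v₀ i, ha _, ?_⟩
  have heq : (fun i => a i + (algebraMap F (QuotRing F k) c * t) * v₀ i)
      = a + c • (φ.symm v) := by
    funext i
    rw [ht]
    show a i + algebraMap F (QuotRing F k) c * t * v₀ i = a i + c • (t * v₀ i)
    rw [Algebra.smul_def c (t * v₀ i), mul_assoc]
  rw [heq, map_add, map_smul, φ.apply_symm_apply]
end

section
/- Let F be a finite field and n ≥ 1. If E ⊆ F^n is such that for every x ∈ F^n \ E there exists a line γ through x with γ \ {x} ⊆ E, then |E| ≥ c_n |F|^n for a constant c_n > 0 depending only on n (Nikodym set bound over finite fields). -/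
open MvPolynomial Polynomial

lemma natDegree_aeval_affine_le {F : Type} [Field F] {n : ℕ}
    (f : Fin n → Polynomial F) (hf : ∀ i, (f i).natDegree ≤ 1)
    (P : MvPolynomial (Fin n) F) :
    (MvPolynomial.aeval f P).natDegree ≤ P.totalDegree := by
  conv_lhs => rw [P.as_sum]
  rw [map_sum]
  apply Polynomial.natDegree_sum_le_of_forall_le
  intro s hs
  rw [MvPolynomial.aeval_monomial]
  refine (Polynomial.natDegree_mul_le).trans ?_
  have h1 : (s.prod fun i k => f i ^ k).natDegree ≤ s.sum fun _ e => e := by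
    rw [Finsupp.prod]
    refine (Polynomial.natDegree_prod_le _ _).trans ?_
    rw [Finsupp.sum]
    apply Finset.sum_le_sum
    intro i _
    exact Polynomial.natDegree_pow_le.trans (by
      have := hf i; calc s i * (f i).natDegree ≤ s i * 1 := Nat.mul_le_mul_left _ this
        _ = s i := Nat.mul_one _)
  have h2 : (algebraMap F (Polynomial F) (MvPolynomial.coeff s P)).natDegree = 0 := by
    simp [Polynomial.natDegree_C]
  have h3 := MvPolynomial.le_totalDegree hs
  omega

lemma nikodym_poly_vanish {F : Type} [Field F] [Fintype F] {n : ℕ}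
    {E : Set (Fin n → F)}
    (hE : ∀ x : Fin n → F, x ∉ E →
      ∃ v : Fin n → F, v ≠ 0 ∧ ∀ t : F, t ≠ 0 → x + t • v ∈ E)
    (P : MvPolynomial (Fin n) F)
    (hdeg : P.totalDegree ≤ Fintype.card F - 2)
    (hvar : P ∈ restrictDegree (Fin n) F (Fintype.card F - 1))
    (hev : ∀ x ∈ E, MvPolynomial.eval x P = 0) : P = 0 := by
  classical
  have hq : 2 ≤ Fintype.card F := Fintype.one_lt_card
  refine MvPolynomial.eq_zero_of_eval_eq_zero _ _ P ?_ hvar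
  intro x
  by_cases hx : x ∈ E
  · exact hev x hx
  obtain ⟨v, hv, hline⟩ := hE x hx
  set f : Fin n → Polynomial F := fun i => Polynomial.C (x i) + Polynomial.C (v i) * Polynomial.X
  set Q : Polynomial F := MvPolynomial.aeval f P with hQ
  have hevalQ : ∀ t : F, Q.eval t = MvPolynomial.eval (x + t • v) P := by
    intro t
    rw [← Polynomial.coe_aeval_eq_eval, hQ, MvPolynomial.comp_aeval_apply]
    have h2 : (fun i => Polynomial.aeval t (f i)) = fun i => (x + t • v) i := by
      funext i
      simp only [f, map_add, map_mul, Polynomial.aeval_C, Polynomial.aeval_X, Pi.add_apply,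
        Pi.smul_apply, smul_eq_mul, Algebra.algebraMap_self, RingHom.id_apply]
      ring
    rw [h2]
    rw [← MvPolynomial.coe_aeval_eq_eval]
    rfl
  have hdegQ : Q.natDegree ≤ Fintype.card F - 2 := by
    refine (natDegree_aeval_affine_le f ?_ P).trans hdeg
    intro i
    refine (Polynomial.natDegree_add_le _ _).trans ?_
    have h1 : (Polynomial.C (v i) * Polynomial.X).natDegree ≤ 1 :=
      (Polynomial.natDegree_C_mul_le _ _).trans (by simp)
    simp only [Polynomial.natDegree_C, max_le_iff]
    exact ⟨Nat.zero_le _, h1⟩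
  have hQ0 : Q = 0 := by
    apply Polynomial.eq_zero_of_natDegree_lt_card_of_eval_eq_zero' Q
      ((Finset.univ : Finset F).erase 0)
    · intro t ht
      rw [hevalQ t]
      exact hev _ (hline t (Finset.ne_of_mem_erase ht))
    · rw [Finset.card_erase_of_mem (Finset.mem_univ 0), Finset.card_univ]
      omega
  have h0 := hevalQ 0
  rw [hQ0] at h0
  simp only [Polynomial.eval_zero, zero_smul, add_zero] at h0
  exact h0.symm

lemma finrank_restrictDegree_box (F : Type) [Field F] (n m : ℕ) :
    Module.finrank F (restrictDegree (Fin n) F m) = (m + 1) ^ n := by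
  classical
  let e : {s : Fin n →₀ ℕ // ∀ i, s i ≤ m} ≃ (Fin n → Fin (m + 1)) :=
  { toFun := fun s i => ⟨s.1 i, Nat.lt_succ_of_le (s.2 i)⟩
    invFun := fun g => ⟨Finsupp.equivFunOnFinite.symm fun i => (g i : ℕ),
      fun i => Nat.lt_succ_iff.mp (g i).2⟩
    left_inv := by intro s; ext i; simp
    right_inv := by intro g; funext i; ext; simp }
  haveI : Fintype {s : Fin n →₀ ℕ // ∀ i, s i ≤ m} := Fintype.ofEquiv _ e.symm
  have b : Module.Basis {s : Fin n →₀ ℕ // ∀ i, s i ≤ m} F (restrictDegree (Fin n) F m) :=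
    basisRestrictSupport F {s : Fin n →₀ ℕ | ∀ i, s i ≤ m}
  rw [Module.finrank_eq_card_basis b, Fintype.card_congr e]
  simp

lemma nikodym_card_bound {F : Type} [Field F] [Fintype F] {n : ℕ} (hn : 1 ≤ n)
    (E : Set (Fin n → F))
    (hE : ∀ x : Fin n → F, x ∉ E →
      ∃ v : Fin n → F, v ≠ 0 ∧ ∀ t : F, t ≠ 0 → x + t • v ∈ E) :
    ((Fintype.card F - 2) / n + 1) ^ n ≤ E.ncard := by
  classical
  have hq : 2 ≤ Fintype.card F := Fintype.one_lt_card
  set q := Fintype.card F with hqdef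
  set m := (q - 2) / n with hm
  by_contra hlt
  push_neg at hlt
  haveI : Fintype (Fin n → F) := inferInstance
  haveI : Fintype E := E.toFinite.fintype
  -- evaluation map
  let L : restrictDegree (Fin n) F m →ₗ[F] (E → F) :=
  { toFun := fun p e => MvPolynomial.eval (e : Fin n → F) (p : MvPolynomial (Fin n) F)
    map_add' := by intros; funext e; simp
    map_smul' := by intros; funext e; simp }
  have hLinj : Function.Injective L := by
    rw [injective_iff_map_eq_zero]
    intro p hp
    have hevE : ∀ x ∈ E, MvPolynomial.eval x (p : MvPolynomial (Fin n) F) = 0 := by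
      intro x hx
      exact congrFun hp ⟨x, hx⟩
    have hmem := p.2
    rw [mem_restrictDegree] at hmem
    have htot : (p : MvPolynomial (Fin n) F).totalDegree ≤ q - 2 := by
      rw [MvPolynomial.totalDegree]
      apply Finset.sup_le
      intro s hs
      have : (s.sum fun _ e => e) ≤ n * m := by
        rw [Finsupp.sum]
        calc ∑ i ∈ s.support, s i ≤ ∑ i : Fin n, s i :=
              Finset.sum_le_sum_of_subset (Finset.subset_univ _)
          _ ≤ ∑ _i : Fin n, m := Finset.sum_le_sum fun i _ => hmem s hs i
          _ = n * m := by simp [mul_comm]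
      exact this.trans (by rw [hm, mul_comm]; exact Nat.div_mul_le_self _ _)
    have hvar' : (p : MvPolynomial (Fin n) F) ∈ restrictDegree (Fin n) F (q - 1) := by
      have hmle : m ≤ q - 1 := (Nat.div_le_self _ _).trans (by omega)
      refine restrictSupport_mono F ?_ p.2
      intro s hs i
      exact (hs i).trans hmle
    exact Subtype.ext (nikodym_poly_vanish hE _ htot hvar' hevE)
  have h1 : Module.finrank F (restrictDegree (Fin n) F m) ≤ Module.finrank F (E → F) :=
    LinearMap.finrank_le_finrank_of_injective hLinj
  rw [finrank_restrictDegree_box, Module.finrank_fintype_fun_eq_card] at h1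
  have hc : Fintype.card E = E.ncard := by
    rw [← Nat.card_coe_set_eq, Nat.card_eq_fintype_card]
  omega

/-- **Nikodym set bound over finite fields**: if for every `x ∈ F^n \ E` there is a line
`γ` through `x` with `γ \ {x} ⊆ E`, then `|E| ≥ c_n |F|^n`. -/
theorem nikodym_set_bound (n : ℕ) (hn : 1 ≤ n) :
    ∃ c : ℝ, 0 < c ∧ ∀ (F : Type) [Field F] [Fintype F], ∀ E : Set (Fin n → F),
      (∀ x : Fin n → F, x ∉ E →
        ∃ v : Fin n → F, v ≠ 0 ∧ ∀ t : F, t ≠ 0 → x + t • v ∈ E) →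
      c * (Fintype.card F : ℝ) ^ n ≤ E.ncard := by
  have hnR : (0:ℝ) < n := by exact_mod_cast hn
  refine ⟨(1 / (2 * (n:ℝ))) ^ n, by positivity, ?_⟩
  intro F _ _ E hE
  have key := nikodym_card_bound hn E hE
  set q := Fintype.card F with hqdef
  have hq : 2 ≤ q := Fintype.one_lt_card
  set m := (q - 2) / n with hm
  have hnat : q ≤ 2 * n * (m + 1) := by
    have h1 : q - 2 < (m + 1) * n := by
      rw [← Nat.div_lt_iff_lt_mul (by omega : 0 < n)]
      omega
    have h2 : 1 ≤ (m + 1) * n := Nat.one_le_iff_ne_zero.mpr (by positivity)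
    have h3 : q ≤ 2 * ((m + 1) * n) := by omega
    calc q ≤ 2 * ((m + 1) * n) := h3
      _ = 2 * n * (m + 1) := by ring
  have h2n : (0:ℝ) < 2 * n := by positivity
  have hdiv : (q:ℝ) / (2 * n) ≤ ((m + 1 : ℕ) : ℝ) := by
    rw [div_le_iff₀ h2n]
    calc (q:ℝ) ≤ ((2 * n * (m + 1) : ℕ) : ℝ) := by exact_mod_cast hnat
      _ = ((m + 1 : ℕ) : ℝ) * (2 * n) := by push_cast; ring
  rw [show (1 / (2 * (n:ℝ))) ^ n * (q:ℝ) ^ n = ((q:ℝ) / (2 * n)) ^ n by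
    rw [← mul_pow]; congr 1; ring]
  refine le_trans (pow_le_pow_left₀ (by positivity) hdiv n) ?_
  exact_mod_cast key
end
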